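/- Let α ∈ (0,1) and let C_∞ be a symmetric positive definite matrix satisfying C_∞⁻¹ = GᵀΣ_ν⁻¹G + (α²C_∞ + Σ_ω)⁻¹, and set Ĉ_∞ = α²C_∞ + Σ_ω. Then Σ_ω ⪯ Ĉ_∞ and (1−α²) Ĉ_∞ ⪯ Σ_ω, i.e. Σ_ω ⪯ Ĉ_∞ ⪯ Σ_ω/(1−α²). -/

import Mathlib

open Matrix

section Aux
set_option linter.unusedVariables false

variable {n : Type*} [Fintype n] [DecidableEq n]

open scoped MatrixOrder in
noncomputable def Matrix.PosSemidef.sqrt {X : Matrix n n ℝ} (hX : X.PosSemidef) :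
    Matrix n n ℝ := CFC.sqrt X

open scoped MatrixOrder in
lemma Matrix.PosSemidef.sqrt_mul_self {X : Matrix n n ℝ} (hX : X.PosSemidef) :
    hX.sqrt * hX.sqrt = X := CFC.sqrt_mul_sqrt_self X hX.nonneg

open scoped MatrixOrder in
lemma Matrix.PosSemidef.posSemidef_sqrt {X : Matrix n n ℝ} (hX : X.PosSemidef) :
    hX.sqrt.PosSemidef := (CFC.sqrt_nonneg X).posSemidef

lemma psd_smul {M : Matrix n n ℝ} (hM : M.PosSemidef) {c : ℝ} (hc : 0 ≤ c) :
    (c • M).PosSemidef := by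
  constructor
  · unfold Matrix.IsHermitian
    rw [conjTranspose_smul, hM.1]
    simp
  · intro x
    exact (hM.smul hc).2 x

lemma sqrt_det_unit {X : Matrix n n ℝ} (hX : X.PosSemidef) (hdet : IsUnit X.det) :
    IsUnit hX.sqrt.det := by
  rw [isUnit_iff_ne_zero]
  intro h
  have : X.det = 0 := by rw [← hX.sqrt_mul_self, det_mul, h, mul_zero]
  exact hdet.ne_zero this

lemma inv_det_unit {X : Matrix n n ℝ} (hdet : IsUnit X.det) : IsUnit (X⁻¹).det := by
  rw [det_nonsing_inv, Ring.inverse_eq_inv, isUnit_iff_ne_zero, ne_eq, inv_eq_zero]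
  exact hdet.ne_zero

lemma conj_aux {X U : Matrix n n ℝ} (hdet : IsUnit X.det)
    (hUU : U * U = X⁻¹) : U * X * U = 1 := by
  have hUdet : IsUnit U.det := by
    rw [isUnit_iff_ne_zero]
    intro h
    exact (inv_det_unit hdet).ne_zero (by rw [← hUU, det_mul, h, mul_zero])
  have hXUU : X = U⁻¹ * U⁻¹ := by
    rw [← Matrix.mul_inv_rev, hUU, Matrix.nonsing_inv_nonsing_inv _ hdet]
  nth_rewrite 1 [hXUU]
  rw [← Matrix.mul_assoc, Matrix.mul_nonsing_inv _ hUdet,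
    Matrix.one_mul, Matrix.nonsing_inv_mul _ hUdet]

lemma conj_sqrtinv {X : Matrix n n ℝ} (hX : X.PosSemidef) (hdet : IsUnit X.det)
    (hi : (X⁻¹).PosSemidef) : hi.sqrt * X * hi.sqrt = 1 :=
  conj_aux hdet hi.sqrt_mul_self

lemma one_sub_inv_psd {X : Matrix n n ℝ} (hX : X.PosSemidef) (hdet : IsUnit X.det)
    (h1 : (X - 1).PosSemidef) : ((1 : Matrix n n ℝ) - X⁻¹).PosSemidef := by
  have hXinv : (X⁻¹).PosSemidef := hX.inv
  have key : hXinv.sqrt * (X - 1) * hXinv.sqrt = 1 - X⁻¹ := by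
    simp only [Matrix.mul_sub, Matrix.sub_mul, Matrix.mul_one]
    rw [hXinv.sqrt_mul_self, conj_sqrtinv hX hdet hXinv]
  have := h1.conjTranspose_mul_mul_same hXinv.sqrt
  rwa [hXinv.posSemidef_sqrt.1, key] at this

lemma inv_sub_inv_psd {A B : Matrix n n ℝ} (hA : A.PosDef) (hB : B.PosDef)
    (h : (B - A).PosSemidef) : (A⁻¹ - B⁻¹).PosSemidef := by
  have hAdet : IsUnit A.det := isUnit_iff_ne_zero.mpr hA.det_pos.ne'
  have hBdet : IsUnit B.det := isUnit_iff_ne_zero.mpr hB.det_pos.ne'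
  have hAinv : (A⁻¹).PosSemidef := hA.posSemidef.inv
  set T := hAinv.sqrt with hT
  have hTT : T * T = A⁻¹ := hAinv.sqrt_mul_self
  have hTdet : IsUnit T.det := sqrt_det_unit hAinv (inv_det_unit hAdet)
  have hTH : Tᴴ = T := hAinv.posSemidef_sqrt.1
  have hTAT : T * A * T = 1 := conj_sqrtinv hA.posSemidef hAdet hAinv
  set S := T * B * T with hS
  have hSpsd : S.PosSemidef := by
    have := hB.posSemidef.conjTranspose_mul_mul_same T
    rwa [hTH] at this
  have hSdet : IsUnit S.det := by
    rw [hS, det_mul, det_mul]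
    exact (hTdet.mul hBdet).mul hTdet
  have hS1 : (S - 1).PosSemidef := by
    have := h.conjTranspose_mul_mul_same T
    rwa [hTH, Matrix.mul_sub, Matrix.sub_mul, hTAT] at this
  have h2 : ((1 : Matrix n n ℝ) - S⁻¹).PosSemidef := one_sub_inv_psd hSpsd hSdet hS1
  have hSinv : S⁻¹ = T⁻¹ * B⁻¹ * T⁻¹ := by
    rw [hS, Matrix.mul_inv_rev, Matrix.mul_inv_rev, Matrix.mul_assoc]
  have key : T * (1 - S⁻¹) * T = A⁻¹ - B⁻¹ := by
    rw [Matrix.mul_sub, Matrix.sub_mul, Matrix.mul_one, hTT, hSinv]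
    congr 1
    rw [← Matrix.mul_assoc, ← Matrix.mul_assoc, Matrix.mul_nonsing_inv _ hTdet,
      Matrix.one_mul, Matrix.mul_assoc, Matrix.nonsing_inv_mul _ hTdet, Matrix.mul_one]
  have := h2.conjTranspose_mul_mul_same T
  rwa [hTH, key] at this

end Aux

/-- Let `α ∈ (0,1)` and let `Cinf` be a symmetric positive definite
matrix satisfying `Cinf⁻¹ = Gᵀ Sν⁻¹ G + (α² Cinf + Sω)⁻¹`, and set
`Chat = α² Cinf + Sω`. Then `Sω ⪯ Chat` and `(1 − α²) Chat ⪯ Sω`,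
i.e. `Sω ⪯ Chat ⪯ Sω / (1 − α²)`. -/
theorem steady_state_covariance_bounds
    {Nθ Ny : ℕ} (hNθ : 0 < Nθ) (hNy : 0 < Ny)
    (G : Matrix (Fin Ny) (Fin Nθ) ℝ)
    (Sν : Matrix (Fin Ny) (Fin Ny) ℝ) (hSν : Sν.PosDef)
    (Sω : Matrix (Fin Nθ) (Fin Nθ) ℝ) (hSω : Sω.PosDef)
    (α : ℝ) (hα : α ∈ Set.Ioo (0 : ℝ) 1)
    (Cinf : Matrix (Fin Nθ) (Fin Nθ) ℝ) (hCinf : Cinf.PosDef)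
    (hfix : Cinf⁻¹ = Gᵀ * Sν⁻¹ * G + (α ^ 2 • Cinf + Sω)⁻¹)
    (Chat : Matrix (Fin Nθ) (Fin Nθ) ℝ) (hChat : Chat = α ^ 2 • Cinf + Sω) :
    (Chat - Sω).PosSemidef ∧ (Sω - (1 - α ^ 2) • Chat).PosSemidef := by
  have hα2 : (0:ℝ) ≤ α ^ 2 := sq_nonneg α
  have hChatPD : Chat.PosDef := by
    rw [hChat]
    exact Matrix.PosDef.posSemidef_add (psd_smul hCinf.posSemidef hα2) hSω
  have hMpsd : (Gᵀ * Sν⁻¹ * G).PosSemidef := by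
    have := (hSν.inv.posSemidef).conjTranspose_mul_mul_same G
    exact this
  have hdiff : (Cinf⁻¹ - Chat⁻¹).PosSemidef := by
    rw [hfix, hChat]
    simpa using hMpsd
  have hsub : (Chat - Cinf).PosSemidef := by
    have := inv_sub_inv_psd hChatPD.inv hCinf.inv hdiff
    rwa [Matrix.nonsing_inv_nonsing_inv _ (isUnit_iff_ne_zero.mpr hChatPD.det_pos.ne'),
      Matrix.nonsing_inv_nonsing_inv _ (isUnit_iff_ne_zero.mpr hCinf.det_pos.ne')] at this
  constructor
  · have h1 : Chat - Sω = α ^ 2 • Cinf := by rw [hChat]; abel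
    rw [h1]
    exact psd_smul hCinf.posSemidef hα2
  · have h2 : Sω - (1 - α ^ 2) • Chat = α ^ 2 • (Chat - Cinf) := by
      rw [hChat]; module
    rw [h2]
    exact psd_smul hsub hα2
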